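/- Let φ₀ : ℝ → ℝ be differentiable on ℝ with φ₀' differentiable at x₀, and assume φ₀''(x₀) < 0. Let r > 0, let f₀ = exp ∘ φ₀, and define φ_r(y) = exp(−φ₀(y)/r). Then (r³·f₀(x₀)⁴·|φ_r''(x₀)|³ / (φ_r(x₀)³·24³))^{1/5} ≥ (f₀(x₀)⁴·|φ₀''(x₀)|³ / 24³)^{1/5}, with strict inequality whenever φ₀'(x₀) ≠ 0. Indeed, the left-hand side equals (f₀(x₀)^{4/3}·φ₀'(x₀)²/(24·r) + f₀(x₀)^{4/3}·|φ₀''(x₀)|/24)^{3/5}. -/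

import Mathlib

/-- Comparison of the s-concave and log-concave constants `d^{(1)}_{2,sc}` and
`d^{(1)}_{2,lc}` for the density derivative: the s-concave constant is at least the
log-concave one, strictly whenever `φ₀'(x₀) ≠ 0`, with the explicit expression for the
s-concave constant. -/
theorem sc_ge_lc_constant_derivative
    (φ₀ : ℝ → ℝ) (x₀ r : ℝ) (hr : 0 < r)
    (hd : Differentiable ℝ φ₀) (hd2 : DifferentiableAt ℝ (deriv φ₀) x₀)
    (hneg : deriv (deriv φ₀) x₀ < 0)
    (f₀ φr : ℝ → ℝ)
    (hf₀ : f₀ = fun y => Real.exp (φ₀ y))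
    (hφr : φr = fun y => Real.exp (-φ₀ y / r)) :
    (f₀ x₀ ^ 4 * |deriv (deriv φ₀) x₀| ^ 3 / 24 ^ 3) ^ ((1 : ℝ) / 5) ≤
        (r ^ 3 * f₀ x₀ ^ 4 * |deriv (deriv φr) x₀| ^ 3 / (φr x₀ ^ 3 * 24 ^ 3)) ^
          ((1 : ℝ) / 5) ∧
      (deriv φ₀ x₀ ≠ 0 →
        (f₀ x₀ ^ 4 * |deriv (deriv φ₀) x₀| ^ 3 / 24 ^ 3) ^ ((1 : ℝ) / 5) <
          (r ^ 3 * f₀ x₀ ^ 4 * |deriv (deriv φr) x₀| ^ 3 / (φr x₀ ^ 3 * 24 ^ 3)) ^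
            ((1 : ℝ) / 5)) ∧
      (r ^ 3 * f₀ x₀ ^ 4 * |deriv (deriv φr) x₀| ^ 3 / (φr x₀ ^ 3 * 24 ^ 3)) ^
          ((1 : ℝ) / 5) =
        (f₀ x₀ ^ ((4 : ℝ) / 3) * (deriv φ₀ x₀) ^ 2 / (24 * r) +
          f₀ x₀ ^ ((4 : ℝ) / 3) * |deriv (deriv φ₀) x₀| / 24) ^ ((3 : ℝ) / 5) := by
  subst hf₀ hφr
  set a := deriv φ₀ x₀ with ha
  set b := deriv (deriv φ₀) x₀ with hb
  set E := Real.exp (φ₀ x₀) with hE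
  set P := Real.exp (-φ₀ x₀ / r) with hP
  have hEpos : 0 < E := Real.exp_pos _
  have hPpos : 0 < P := Real.exp_pos _
  -- first derivative of φr
  have hder : deriv (fun y => Real.exp (-φ₀ y / r))
      = fun y => Real.exp (-φ₀ y / r) * (-(deriv φ₀ y) / r) := by
    funext y
    have h1 : HasDerivAt (fun y => -φ₀ y / r) (-(deriv φ₀ y) / r) y :=
      ((hd y).hasDerivAt.neg.div_const r)
    exact h1.exp.deriv
  -- second derivative at x₀
  have h2 : HasDerivAt (fun y => Real.exp (-φ₀ y / r) * (-(deriv φ₀ y) / r))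
      (P * (-a / r) * (-a / r) + P * (-b / r)) x₀ := by
    have h1 : HasDerivAt (fun y => -φ₀ y / r) (-a / r) x₀ :=
      ((hd x₀).hasDerivAt.neg.div_const r)
    have he : HasDerivAt (fun y => Real.exp (-φ₀ y / r)) (P * (-a / r)) x₀ := h1.exp
    have hg : HasDerivAt (fun y => -(deriv φ₀ y) / r) (-b / r) x₀ :=
      (hd2.hasDerivAt.neg.div_const r)
    exact he.mul hg
  have hC : deriv (deriv fun y => Real.exp (-φ₀ y / r)) x₀ = P * (a ^ 2 / r ^ 2 - b / r) := by
    rw [hder, h2.deriv]; ring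
  set C := a ^ 2 / r ^ 2 - b / r with hCdef
  have hCpos : 0 < C := by
    have h1 : b / r < 0 := div_neg_of_neg_of_pos hneg hr
    have h2 : 0 ≤ a ^ 2 / r ^ 2 := by positivity
    simp only [hCdef]; linarith
  set M := a ^ 2 / r - b with hMdef
  have hMpos : 0 < M := by
    have h1 : b / r < 0 := div_neg_of_neg_of_pos hneg hr
    have h2 : 0 ≤ a ^ 2 / r := by positivity
    have h3 : b < 0 := hneg
    simp only [hMdef]; linarith
  have habs : |P * C| = P * C := abs_of_pos (by positivity)
  have hbabs : |b| = -b := abs_of_neg hneg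
  have key : r ^ 3 * E ^ 4 * |P * C| ^ 3 / (P ^ 3 * 24 ^ 3) = E ^ 4 * M ^ 3 / 24 ^ 3 := by
    rw [habs]
    have hP0 : P ≠ 0 := ne_of_gt hPpos
    have hr0 : r ≠ 0 := ne_of_gt hr
    simp only [hCdef, hMdef]
    field_simp
  rw [hC, key]
  have hbM : -b ≤ M := by
    have : 0 ≤ a ^ 2 / r := by positivity
    simp only [hMdef]; linarith
  refine ⟨?_, ?_, ?_⟩
  · apply Real.rpow_le_rpow (by positivity) _ (by norm_num)
    rw [hbabs]
    gcongr
    · exact le_of_lt (by linarith)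
  · intro hane
    apply Real.rpow_lt_rpow (by positivity) _ (by norm_num)
    rw [hbabs]
    have hbM' : -b < M := by
      have h0 : 0 < a ^ 2 := lt_of_le_of_ne (sq_nonneg a) (Ne.symm (pow_ne_zero 2 hane))
      have : 0 < a ^ 2 / r := div_pos h0 hr
      simp only [hMdef]; linarith
    gcongr
    · linarith
  · have hbase : E ^ ((4 : ℝ) / 3) * a ^ 2 / (24 * r) + E ^ ((4 : ℝ) / 3) * |b| / 24
        = E ^ ((4 : ℝ) / 3) * M / 24 := by
      rw [hbabs]
      simp only [hMdef]
      field_simp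
      ring
    rw [hbase]
    have hE4 : E ^ 4 = (E ^ ((4 : ℝ) / 3)) ^ 3 := by
      rw [← Real.rpow_natCast (E ^ ((4 : ℝ) / 3)) 3, ← Real.rpow_mul hEpos.le,
        ← Real.rpow_natCast E 4]
      norm_num
    have hX : (0 : ℝ) ≤ E ^ ((4 : ℝ) / 3) * M / 24 := by positivity
    have hcube : E ^ 4 * M ^ 3 / 24 ^ 3 = (E ^ ((4 : ℝ) / 3) * M / 24) ^ 3 := by
      rw [hE4]; ring
    rw [hcube, ← Real.rpow_natCast (E ^ ((4 : ℝ) / 3) * M / 24) 3,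
      ← Real.rpow_mul hX]
    norm_num
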